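/- Asymptotics of the entropy–energy optimum: define F_t(r) = ρ log(ϑ r) − (r/t)[log(ερ log(ϑ r)) − δ_r log log r] for constants ρ, ϑ, ε > 0 and a differentiable function r ↦ δ_r with δ_r → 0 and r·(d/dr)δ_r → 0 as r → ∞. Then any maximizer r_t of F_t satisfies r_t = (1+o(1))·ρt/log log t as t → ∞, and sup_{r>0} F_t(r) ≤ ρ log(ϑ 𝔯_t) − ρ + o(1) with 𝔯_t = ρt/log log t. -/

import Mathlib

open Filter Real

lemma EE.tendsto_log_div_self : Tendsto (fun x : ℝ => Real.log x / x) atTop (nhds 0) :=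
  Real.isLittleO_log_id_atTop.tendsto_div_nhds_zero

lemma EE.tendsto_loglog : Tendsto (fun x : ℝ => Real.log (Real.log x)) atTop atTop :=
  Real.tendsto_log_atTop.comp Real.tendsto_log_atTop

lemma EE.tendsto_self_div_log : Tendsto (fun x : ℝ => x / Real.log x) atTop atTop := by
  rw [tendsto_atTop]
  intro b
  have h1 : ∀ᶠ x : ℝ in atTop, Real.log x / x < 1 / (max b 1) :=
    EE.tendsto_log_div_self.eventually (eventually_lt_nhds (by positivity))
  filter_upwards [h1, eventually_ge_atTop (Real.exp 1)] with x hx hex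
  have hx0 : 0 < x := lt_of_lt_of_le (Real.exp_pos 1) hex
  have hlog : 1 ≤ Real.log x := by
    rw [← Real.log_exp 1]
    exact Real.log_le_log (Real.exp_pos 1) hex
  have hlogpos : 0 < Real.log x := lt_of_lt_of_le one_pos hlog
  rw [le_div_iff₀ hlogpos]
  have h2 : Real.log x * max b 1 < x := by
    have := (div_lt_div_iff₀ hx0 (by positivity : (0:ℝ) < max b 1)).mp hx
    linarith
  nlinarith [le_max_left b 1, le_max_right b 1]

lemma EE.tendsto_self_div_loglog :
    Tendsto (fun x : ℝ => x / Real.log (Real.log x)) atTop atTop := by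
  apply tendsto_atTop_mono' atTop ?_ EE.tendsto_self_div_log
  filter_upwards [eventually_ge_atTop (Real.exp (Real.exp 1)),
    EE.tendsto_loglog.eventually_ge_atTop 1] with x hex hll
  have hx0 : 0 < x := lt_of_lt_of_le (Real.exp_pos _) hex
  have hlx : 0 < Real.log (Real.log x) := lt_of_lt_of_le one_pos hll
  have hle : Real.log (Real.log x) ≤ Real.log x := by
    have h0 : Real.exp 1 ≤ Real.log x := by
      rw [← Real.log_exp (Real.exp 1)]
      exact Real.log_le_log (Real.exp_pos _) hex
    have h := Real.log_le_sub_one_of_pos (lt_of_lt_of_le (Real.exp_pos 1) h0)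
    linarith
  exact div_le_div_of_nonneg_left hx0.le hlx hle
lemma EE.envelope (δ : ℝ → ℝ) (hcont : Continuous δ) (hδ0 : Tendsto δ atTop (nhds 0)) :
    ∃ η : ℝ → ℝ, Tendsto η atTop (nhds 0) ∧ (∀ x, 0 ≤ η x) ∧ ∀ x r, x ≤ r → |δ r| ≤ η x := by
  obtain ⟨N₁, hN₁⟩ : ∃ N : ℝ, ∀ r ≥ N, |δ r| ≤ 1 := by
    obtain ⟨N, hN⟩ := Metric.tendsto_atTop.mp hδ0 1 one_pos
    exact ⟨N, fun r hr => by
      have := hN r hr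
      rw [Real.dist_eq, sub_zero] at this
      exact this.le⟩
  set η : ℝ → ℝ := fun x => sSup ((fun r => |δ r|) '' Set.Ici x) with hηdef
  have hbdd : ∀ x : ℝ, BddAbove ((fun r => |δ r|) '' Set.Ici x) := by
    intro x
    rcases le_or_gt N₁ x with h | h
    · exact ⟨1, fun y hy => by
        obtain ⟨r, hr, rfl⟩ := hy
        exact hN₁ r (le_trans h hr)⟩
    · have hun : Set.Ici x = Set.Icc x N₁ ∪ Set.Ici N₁ := (Set.Icc_union_Ici_eq_Ici h.le).symm
      rw [hun, Set.image_union]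
      refine BddAbove.union ?_ ?_
      · exact (isCompact_Icc.image (hcont.abs)).bddAbove
      · exact ⟨1, fun y hy => by
          obtain ⟨r, hr, rfl⟩ := hy
          exact hN₁ r hr⟩
  have hle : ∀ x r : ℝ, x ≤ r → |δ r| ≤ η x := fun x r hxr =>
    le_csSup (hbdd x) ⟨r, hxr, rfl⟩
  have hnonneg : ∀ x, 0 ≤ η x := fun x => le_trans (abs_nonneg _) (hle x x le_rfl)
  refine ⟨η, ?_, hnonneg, hle⟩
  rw [Metric.tendsto_atTop]
  intro ε hε
  obtain ⟨N, hN⟩ := Metric.tendsto_atTop.mp hδ0 (ε / 2) (by positivity)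
  refine ⟨N, fun x hx => ?_⟩
  rw [Real.dist_eq, sub_zero, abs_of_nonneg (hnonneg x)]
  have : η x ≤ ε / 2 := by
    apply Real.sSup_le _ (by positivity)
    rintro y ⟨r, hr, rfl⟩
    have := hN r (le_trans hx hr)
    rw [Real.dist_eq, sub_zero] at this
    exact this.le
  linarith

lemma EE.sup_bound {ρ ϑ : ℝ} (hρ : 0 < ρ) (hϑ : 0 < ϑ) {c r : ℝ} (hc : 0 < c) (hr : 0 < r) :
    ρ * Real.log (ϑ * r) - c * r ≤ ρ * Real.log (ϑ * (ρ / c)) - ρ := by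
  have h1 : Real.log (ϑ * r) - Real.log (ϑ * (ρ / c)) = Real.log (r * c / ρ) := by
    rw [← Real.log_div (by positivity) (by positivity)]
    congr 1
    field_simp
  have h2 : Real.log (r * c / ρ) ≤ r * c / ρ - 1 := Real.log_le_sub_one_of_pos (by positivity)
  have h3 : ρ * (Real.log (ϑ * r) - Real.log (ϑ * (ρ / c))) ≤ c * r - ρ := by
    rw [h1]
    calc ρ * Real.log (r * c / ρ) ≤ ρ * (r * c / ρ - 1) := by nlinarith
    _ = c * r - ρ := by field_simp
  linarith

lemma EE.hmono_left {x y : ℝ} (hx : 0 < x) (hxy : x ≤ y) (hy : y ≤ 1) :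
    Real.log x - x ≤ Real.log y - y := by
  have hy0 : 0 < y := lt_of_lt_of_le hx hxy
  have h : Real.log x - Real.log y ≤ x / y - 1 := by
    have := Real.log_le_sub_one_of_pos (show 0 < x / y by positivity)
    rwa [Real.log_div (ne_of_gt hx) (ne_of_gt hy0)] at this
  have hxy' : y * (x / y - 1) = x - y := by field_simp
  have h' : y * (Real.log x - Real.log y) ≤ x - y :=
    (mul_le_mul_of_nonneg_left h hy0.le).trans_eq hxy'
  have hlog : Real.log x ≤ Real.log y := Real.log_le_log hx hxy
  nlinarith [mul_nonneg (sub_nonneg.2 hy) (sub_nonneg.2 hlog)]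

lemma EE.hmono_right {x y : ℝ} (hx : 1 ≤ x) (hxy : x ≤ y) :
    Real.log y - y ≤ Real.log x - x := by
  have hx0 : 0 < x := lt_of_lt_of_le one_pos hx
  have hy0 : 0 < y := lt_of_lt_of_le hx0 hxy
  have h : Real.log y - Real.log x ≤ y / x - 1 := by
    have := Real.log_le_sub_one_of_pos (show 0 < y / x by positivity)
    rwa [Real.log_div (ne_of_gt hy0) (ne_of_gt hx0)] at this
  have hxy' : x * (y / x - 1) = y - x := by field_simp
  have h' : x * (Real.log y - Real.log x) ≤ y - x :=
    (mul_le_mul_of_nonneg_left h hx0.le).trans_eq hxy'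
  have hlog : Real.log x ≤ Real.log y := Real.log_le_log hx0 hxy
  nlinarith [mul_nonneg (sub_nonneg.2 hx) (sub_nonneg.2 hlog)]
lemma EE.tendsto_logloglog_div_log :
    Tendsto (fun t : ℝ => Real.log (Real.log (Real.log t)) / Real.log t) atTop (nhds 0) := by
  have f1 : Tendsto (fun t : ℝ => Real.log (Real.log (Real.log t)) / Real.log (Real.log t))
      atTop (nhds 0) := EE.tendsto_log_div_self.comp EE.tendsto_loglog
  have f2 : Tendsto (fun t : ℝ => Real.log (Real.log t) / Real.log t) atTop (nhds 0) :=
    EE.tendsto_log_div_self.comp Real.tendsto_log_atTop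
  have := f1.mul f2
  rw [mul_zero] at this
  apply this.congr'
  filter_upwards [EE.tendsto_loglog.eventually_ge_atTop 1] with t ht
  have : Real.log (Real.log t) ≠ 0 := by linarith
  field_simp

lemma EE.aux1 {c : ℝ} (hc : 0 < c) :
    Tendsto (fun t : ℝ =>
      Real.log (Real.log (c * t / Real.log (Real.log t))) / Real.log (Real.log t))
      atTop (nhds 1) := by
  set w : ℝ → ℝ := fun t =>
    (Real.log c + Real.log t - Real.log (Real.log (Real.log t))) / Real.log t with hw
  have hwt : Tendsto w atTop (nhds 1) := by
    have h3 : Tendsto (fun t : ℝ => Real.log c / Real.log t) atTop (nhds 0) :=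
      tendsto_const_nhds.div_atTop Real.tendsto_log_atTop
    have := (h3.add (tendsto_const_nhds : Tendsto (fun _ : ℝ => (1:ℝ)) atTop (nhds 1))).sub
      EE.tendsto_logloglog_div_log
    rw [zero_add, sub_zero] at this
    apply Tendsto.congr' _ this
    filter_upwards [Real.tendsto_log_atTop.eventually_ge_atTop 1] with t ht
    have hl : Real.log t ≠ 0 := by linarith
    rw [hw]
    field_simp
  have hlogw : Tendsto (fun t => Real.log (w t)) atTop (nhds 0) := by
    have := (Real.continuousAt_log one_ne_zero).tendsto.comp hwt
    rwa [Real.log_one] at this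
  have hmain : Tendsto (fun t => 1 + Real.log (w t) / Real.log (Real.log t)) atTop (nhds 1) := by
    have := (tendsto_const_nhds : Tendsto (fun _ : ℝ => (1:ℝ)) atTop (nhds 1)).add
      (hlogw.div_atTop EE.tendsto_loglog)
    rwa [add_zero] at this
  apply Tendsto.congr' _ hmain
  filter_upwards [eventually_gt_atTop 0, Real.tendsto_log_atTop.eventually_gt_atTop 1,
    EE.tendsto_loglog.eventually_ge_atTop 1,
    hwt.eventually (eventually_gt_nhds (by norm_num : (1:ℝ)/2 < 1))] with t ht0 hlt hllt hwpos
  have hlne : Real.log t ≠ 0 := by linarith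
  have hllne : Real.log (Real.log t) ≠ 0 := by linarith
  have hwne : w t ≠ 0 := by linarith
  have e1 : c * t / Real.log (Real.log t) = c * t / Real.log (Real.log t) := rfl
  have e2 : Real.log (c * t / Real.log (Real.log t)) = Real.log t * w t := by
    rw [Real.log_div (by positivity) hllne, Real.log_mul (ne_of_gt hc) (ne_of_gt ht0), hw]
    field_simp
  rw [e2, Real.log_mul hlne hwne]
  field_simp

/-- The entropy–energy trade-off function
`F_t(r) = ρ log(ϑ r) − (r/t)[log(ερ log(ϑ r)) − δ_r log log r]`. -/
noncomputable def Ffun (ρ ϑ ε : ℝ) (δ : ℝ → ℝ) (t r : ℝ) : ℝ :=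
  ρ * Real.log (ϑ * r) -
    (r / t) * (Real.log (ε * ρ * Real.log (ϑ * r)) - δ r * Real.log (Real.log r))

set_option maxHeartbeats 2000000

/-- asymptotics of the entropy–energy optimum. If `δ_r → 0` and
`r·(d/dr)δ_r → 0`, then (beyond a fixed threshold `r₀` making all logarithms meaningful)
`sup_r F_t(r) ≤ ρ log(ϑ𝔯_t) − ρ + o(1)` with `𝔯_t = ρt/log log t`, and any maximizer
`r_t` of `F_t` satisfies `r_t = (1+o(1))·𝔯_t` as `t → ∞`. -/
theorem entropy_energy_optimum (ρ ϑ ε : ℝ) (hρ : 0 < ρ) (hϑ : 0 < ϑ) (hε : 0 < ε)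
    (δ : ℝ → ℝ) (hdiff : Differentiable ℝ δ)
    (hδ0 : Tendsto δ atTop (nhds 0))
    (hδ'0 : Tendsto (fun r => r * deriv δ r) atTop (nhds 0)) :
    ∃ r₀ : ℝ, 0 < r₀ ∧
      (∃ e : ℝ → ℝ, Tendsto e atTop (nhds 0) ∧
        ∀ᶠ t in atTop, ∀ r ≥ r₀,
          Ffun ρ ϑ ε δ t r ≤
            ρ * Real.log (ϑ * (ρ * t / Real.log (Real.log t))) - ρ + e t) ∧
      (∀ R : ℝ → ℝ,
        (∀ᶠ t in atTop, r₀ ≤ R t ∧ ∀ r ≥ r₀, Ffun ρ ϑ ε δ t r ≤ Ffun ρ ϑ ε δ t (R t)) →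
        Tendsto (fun t => R t / (ρ * t / Real.log (Real.log t))) atTop (nhds 1)) := by
  obtain ⟨η, hηt, hηnn, hηle⟩ := EE.envelope δ hdiff.continuous hδ0
  set C₀ : ℝ := Real.log 2 - Real.log (ε * ρ) with hC₀
  obtain ⟨N₁, hN₁⟩ : ∃ N : ℝ, ∀ r ≥ N, |δ r| ≤ 1/2 := by
    obtain ⟨N, hN⟩ := Metric.tendsto_atTop.mp hδ0 (1/2) (by norm_num)
    exact ⟨N, fun r hr => by
      have := hN r hr
      rw [Real.dist_eq, sub_zero] at this
      exact this.le⟩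
  set A : ℝ := max (2*|Real.log ϑ| + 2) (Real.exp (2*|C₀| + 2)) with hA
  set r₀ : ℝ := max N₁ (Real.exp A) with hr₀def
  have hexpA : Real.exp A ≤ r₀ := le_max_right _ _
  have hN₁r₀ : N₁ ≤ r₀ := le_max_left _ _
  have hA1g : 2*|Real.log ϑ| + 2 ≤ A := le_max_left _ _
  have hA2g : Real.exp (2*|C₀| + 2) ≤ A := le_max_right _ _
  have hr₀pos : 0 < r₀ := lt_of_lt_of_le (Real.exp_pos A) hexpA
  clear_value A r₀
  -- the "entropy cost" function g
  set g : ℝ → ℝ := fun r =>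
    Real.log (ε * ρ * Real.log (ϑ * r)) - δ r * Real.log (Real.log r) with hgdef
  have hF : ∀ t r : ℝ, Ffun ρ ϑ ε δ t r = ρ * Real.log (ϑ * r) - (r / t) * g r :=
    fun t r => rfl
  clear_value g
  -- pointwise facts beyond r₀
  have hfacts : ∀ r, r₀ ≤ r → 0 < r ∧ 0 < Real.log (ϑ * r) ∧
      2*|C₀| + 2 ≤ Real.log (Real.log r) ∧
      (1 - |δ r|) * Real.log (Real.log r) - C₀ ≤ g r ∧ 1 ≤ g r := by
    intro r hr
    have hδr : |δ r| ≤ 1/2 := hN₁ r (le_trans hN₁r₀ hr)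
    have hr0 : 0 < r := lt_of_lt_of_le hr₀pos hr
    have hlogA : A ≤ Real.log r := by
      rw [← Real.log_exp A]
      exact Real.log_le_log (Real.exp_pos A) (le_trans hexpA hr)
    have hlr2 : 2 ≤ Real.log r := by nlinarith [abs_nonneg (Real.log ϑ)]
    have hlogϑr : Real.log (ϑ * r) = Real.log ϑ + Real.log r :=
      Real.log_mul (ne_of_gt hϑ) (ne_of_gt hr0)
    have hhalf : Real.log r / 2 ≤ Real.log (ϑ * r) := by
      rw [hlogϑr]
      have := neg_abs_le (Real.log ϑ)
      nlinarith [abs_nonneg (Real.log ϑ)]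
    have hlogϑrpos : 0 < Real.log (ϑ * r) := lt_of_lt_of_le (by linarith) hhalf
    have hll : 2*|C₀| + 2 ≤ Real.log (Real.log r) := by
      have h1 : Real.exp (2*|C₀| + 2) ≤ Real.log r := le_trans hA2g hlogA
      rw [← Real.log_exp (2*|C₀| + 2)]
      exact Real.log_le_log (Real.exp_pos _) h1
    have hllpos : 0 < Real.log (Real.log r) :=
      lt_of_lt_of_le (by positivity) hll
    have hsplit : g r = Real.log (ε*ρ) + Real.log (Real.log (ϑ*r))
        - δ r * Real.log (Real.log r) := by
      rw [hgdef]
      simp only []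
      rw [Real.log_mul (by positivity) (ne_of_gt hlogϑrpos)]
    have hloglogbound : Real.log (Real.log r) - Real.log 2 ≤ Real.log (Real.log (ϑ*r)) := by
      have := Real.log_le_log (by linarith : (0:ℝ) < Real.log r / 2) hhalf
      rwa [Real.log_div (by linarith) (by norm_num)] at this
    have hdelta : - (|δ r| * Real.log (Real.log r)) ≤ - (δ r * Real.log (Real.log r)) := by
      have := mul_le_mul_of_nonneg_right (le_abs_self (δ r)) (le_of_lt hllpos)
      linarith
    have hg1 : (1 - |δ r|) * Real.log (Real.log r) - C₀ ≤ g r := by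
      rw [hsplit, hC₀]
      nlinarith
    have hg2 : 1 ≤ g r := by
      have h2 : (1/2) * (2*|C₀|+2) ≤ (1 - |δ r|) * Real.log (Real.log r) := by
        apply mul_le_mul (by linarith) hll (by positivity) (by linarith)
      nlinarith [le_abs_self C₀]
    exact ⟨hr0, hlogϑrpos, hll, hg1, hg2⟩
  -- basic limits
  have hLtop : Tendsto (fun t : ℝ => Real.log (Real.log t)) atTop atTop := EE.tendsto_loglog
  have h𝔯top : Tendsto (fun t : ℝ => ρ * t / Real.log (Real.log t)) atTop atTop := by
    have := EE.tendsto_self_div_loglog.const_mul_atTop hρ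
    exact this.congr (fun t => by ring)
  have hηc : Tendsto (fun t : ℝ => η (t / Real.log t)) atTop (nhds 0) :=
    hηt.comp EE.tendsto_self_div_log
  have hcnumev : ∀ᶠ t : ℝ in atTop,
      1 ≤ (1 - η (t / Real.log t)) * (Real.log (Real.log t) - 1) - C₀ := by
    filter_upwards [hηc.eventually (eventually_lt_nhds (by norm_num : (0:ℝ) < 1/2)),
      hLtop.eventually_ge_atTop (2*|C₀| + 3)] with t h1 h2
    have h3 : (1/2) * (Real.log (Real.log t) - 1)
        ≤ (1 - η (t / Real.log t)) * (Real.log (Real.log t) - 1) := by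
      apply mul_le_mul_of_nonneg_right (by linarith)
      nlinarith [abs_nonneg C₀]
    nlinarith [le_abs_self C₀, abs_nonneg C₀]
  -- the normalized cost exponent q
  set q : ℝ → ℝ := fun t =>
    ((1 - η (t / Real.log t)) * (Real.log (Real.log t) - 1) - C₀) / Real.log (Real.log t)
    with hqdef
  clear_value q
  have hq : Tendsto q atTop (nhds 1) := by
    have h1 : Tendsto (fun t : ℝ => 1 - η (t / Real.log t)) atTop (nhds 1) := by
      have := (tendsto_const_nhds : Tendsto (fun _ : ℝ => (1:ℝ)) atTop (nhds 1)).sub hηc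
      rwa [sub_zero] at this
    have hinv : Tendsto (fun t : ℝ => (Real.log (Real.log t))⁻¹) atTop (nhds 0) :=
      tendsto_inv_atTop_zero.comp hLtop
    have h2 : Tendsto (fun t : ℝ => 1 - (Real.log (Real.log t))⁻¹) atTop (nhds 1) := by
      have := (tendsto_const_nhds : Tendsto (fun _ : ℝ => (1:ℝ)) atTop (nhds 1)).sub hinv
      rwa [sub_zero] at this
    have h3c : Tendsto (fun t : ℝ => C₀ * (Real.log (Real.log t))⁻¹) atTop (nhds 0) := by
      have := hinv.const_mul C₀
      rwa [mul_zero] at this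
    have hcomb := (h1.mul h2).sub h3c
    rw [mul_one, sub_zero] at hcomb
    apply Tendsto.congr' _ hcomb
    filter_upwards [hLtop.eventually_ge_atTop 1] with t hL
    have hLne : Real.log (Real.log t) ≠ 0 := by linarith
    rw [hqdef]
    field_simp
  -- the normalized value at the optimum candidate
  set G : ℝ → ℝ := fun t =>
    g (ρ * t / Real.log (Real.log t)) / Real.log (Real.log t) with hGdef
  clear_value G
  have hG : Tendsto G atTop (nhds 1) := by
    have h1 : Tendsto (fun t : ℝ => Real.log (ε*ρ) / Real.log (Real.log t)) atTop (nhds 0) :=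
      tendsto_const_nhds.div_atTop hLtop
    have h2 : Tendsto (fun t : ℝ =>
        Real.log (Real.log (ϑ * ρ * t / Real.log (Real.log t))) / Real.log (Real.log t))
        atTop (nhds 1) := EE.aux1 (mul_pos hϑ hρ)
    have h3 : Tendsto (fun t : ℝ => δ (ρ * t / Real.log (Real.log t)) *
        (Real.log (Real.log (ρ * t / Real.log (Real.log t))) / Real.log (Real.log t)))
        atTop (nhds 0) := by
      have hδcomp : Tendsto (fun t : ℝ => δ (ρ * t / Real.log (Real.log t))) atTop (nhds 0) :=
        hδ0.comp h𝔯top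
      have := hδcomp.mul (EE.aux1 hρ)
      rwa [zero_mul] at this
    have hsum := (h1.add h2).sub h3
    rw [zero_add, sub_zero] at hsum
    apply Tendsto.congr' _ hsum
    filter_upwards [h𝔯top.eventually_ge_atTop r₀, hLtop.eventually_ge_atTop 1] with t h𝔯 hL
    obtain ⟨hr0, hϑrpos, -, -, -⟩ := hfacts _ h𝔯
    have hLne : Real.log (Real.log t) ≠ 0 := by linarith
    rw [hGdef, hgdef]
    simp only []
    rw [Real.log_mul (by positivity) (ne_of_gt hϑrpos),
      show ϑ * ρ * t / Real.log (Real.log t) = ϑ * (ρ * t / Real.log (Real.log t)) by ring]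
    field_simp
  have hFreq : ∀ᶠ t : ℝ in atTop,
      Ffun ρ ϑ ε δ t (ρ * t / Real.log (Real.log t)) =
        ρ * Real.log (ϑ * (ρ * t / Real.log (Real.log t))) - ρ * G t := by
    filter_upwards [eventually_gt_atTop 0, hLtop.eventually_ge_atTop 1] with t ht0 hL
    have hLne : Real.log (Real.log t) ≠ 0 := by linarith
    rw [hF, hGdef]
    simp only []
    field_simp
  have hdiffeq : ∀ᶠ t : ℝ in atTop,
      Real.log (ϑ * (ρ * t / Real.log (Real.log t))) - Real.log (ϑ * (t / Real.log t)) =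
        Real.log ρ + Real.log (Real.log t) - Real.log (Real.log (Real.log t)) := by
    filter_upwards [eventually_gt_atTop 0, Real.tendsto_log_atTop.eventually_ge_atTop 1,
      hLtop.eventually_ge_atTop 1] with t ht0 hlt hL
    have hltne : Real.log t ≠ 0 := by linarith
    have hLne : Real.log (Real.log t) ≠ 0 := by linarith
    rw [show ϑ * (ρ * t / Real.log (Real.log t)) = (ϑ * ρ * t) / Real.log (Real.log t) by ring,
      show ϑ * (t / Real.log t) = (ϑ * t) / Real.log t by ring,
      Real.log_div (by positivity) hLne,
      Real.log_div (by positivity) hltne,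
      Real.log_mul (by positivity) (ne_of_gt ht0),
      Real.log_mul (ne_of_gt hϑ) (ne_of_gt hρ),
      Real.log_mul (ne_of_gt hϑ) (ne_of_gt ht0)]
    ring
  have hlogx_half : ∀ᶠ x : ℝ in atTop, Real.log x ≤ x / 2 := by
    filter_upwards [EE.tendsto_log_div_self.eventually
      (eventually_lt_nhds (by norm_num : (0:ℝ) < 1/2)), eventually_gt_atTop 0] with x h1 h2
    have := (div_lt_iff₀ h2).mp h1
    linarith
  have hlogL : ∀ᶠ t : ℝ in atTop,
      Real.log (Real.log (Real.log t)) ≤ Real.log (Real.log t) / 2 :=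
    hLtop.eventually hlogx_half
  have hc6 : ∀ᶠ t : ℝ in atTop,
      Real.log (Real.log t) - 1 ≤ Real.log (Real.log (t / Real.log t)) := by
    filter_upwards [eventually_gt_atTop 0, Real.tendsto_log_atTop.eventually_ge_atTop 1,
      Real.tendsto_log_atTop.eventually hlogx_half] with t ht0 hlt hhalf
    have hexp : (2:ℝ) ≤ Real.exp 1 := by
      have := Real.add_one_le_exp 1
      linarith
    have h2 : Real.log t / Real.exp 1 ≤ Real.log t - Real.log (Real.log t) := by
      have hp : Real.log t / Real.exp 1 ≤ Real.log t / 2 :=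
        div_le_div_of_nonneg_left (by linarith) (by norm_num) hexp
      linarith
    have h3 : Real.log (t / Real.log t) = Real.log t - Real.log (Real.log t) :=
      Real.log_div (ne_of_gt ht0) (by linarith)
    rw [h3]
    calc Real.log (Real.log t) - 1 = Real.log (Real.log t / Real.exp 1) := by
          rw [Real.log_div (by linarith) (ne_of_gt (Real.exp_pos 1)), Real.log_exp]
      _ ≤ _ := Real.log_le_log (by positivity) h2
  -- the error function
  set e : ℝ → ℝ := fun t => ρ * (Real.log (Real.log (Real.log t)) -
      Real.log ((1 - η (t / Real.log t)) * (Real.log (Real.log t) - 1) - C₀)) with hedef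
  clear_value e
  have he : Tendsto e atTop (nhds 0) := by
    have hlogq : Tendsto (fun t => Real.log (q t)) atTop (nhds 0) := by
      have := (Real.continuousAt_log one_ne_zero).tendsto.comp hq
      rwa [Real.log_one] at this
    have h := hlogq.const_mul (-ρ)
    rw [mul_zero] at h
    apply Tendsto.congr' _ h
    filter_upwards [hLtop.eventually_ge_atTop 1, hcnumev] with t hL hc1
    rw [hedef, hqdef]
    simp only []
    rw [Real.log_div (by linarith) (by linarith)]
    ring
  have hc7 : ∀ᶠ t : ℝ in atTop, ρ * Real.log (ϑ * (t / Real.log t)) ≤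
      ρ * Real.log (ϑ * (ρ * t / Real.log (Real.log t))) - ρ + e t := by
    filter_upwards [hdiffeq, hlogL, he.eventually (eventually_gt_nhds (by norm_num : (-1:ℝ) < 0)),
      hLtop.eventually_ge_atTop (2*|Real.log ρ| + 2*((ρ+1)/ρ))] with t hdifft hlL he1 hLbig
    have hρ1 : 0 < (ρ+1)/ρ := by positivity
    have k1 : (ρ+1)/ρ ≤ Real.log ρ + Real.log (Real.log t) - Real.log (Real.log (Real.log t)) := by
      have := neg_abs_le (Real.log ρ)
      linarith
    have k2 : ρ + 1 ≤ ρ * (Real.log ρ + Real.log (Real.log t)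
        - Real.log (Real.log (Real.log t))) := by
      have h := mul_le_mul_of_nonneg_left k1 hρ.le
      have h2 : ρ * ((ρ+1)/ρ) = ρ + 1 := by field_simp
      linarith
    have k3 : ρ * Real.log (ϑ * (ρ * t / Real.log (Real.log t))) -
        ρ * Real.log (ϑ * (t / Real.log t)) =
        ρ * (Real.log ρ + Real.log (Real.log t) - Real.log (Real.log (Real.log t))) := by
      rw [← hdifft]
      ring
    linarith
  -- eventual lower bound of g on the far region
  have hgev : ∀ᶠ t : ℝ in atTop, (0 < t ∧ 1 ≤ Real.log t ∧
      1 ≤ (1 - η (t / Real.log t)) * (Real.log (Real.log t) - 1) - C₀) ∧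
      ∀ r, r₀ ≤ r → t / Real.log t ≤ r →
        (1 - η (t / Real.log t)) * (Real.log (Real.log t) - 1) - C₀ ≤ g r := by
    filter_upwards [eventually_gt_atTop 0, Real.tendsto_log_atTop.eventually_ge_atTop 1,
      hηc.eventually (eventually_lt_nhds (by norm_num : (0:ℝ) < 1/2)),
      hLtop.eventually_ge_atTop (2*|C₀| + 3), hc6, hcnumev,
      (Real.tendsto_log_atTop.comp EE.tendsto_self_div_log).eventually_ge_atTop 1]
      with t ht0 hlt hη2 hLbig hc6t hc1 hc9
    simp only [Function.comp] at hc9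
    refine ⟨⟨ht0, hlt, hc1⟩, fun r hr hr2 => ?_⟩
    obtain ⟨hr0, -, hll, hg1, -⟩ := hfacts r hr
    have hq0 : 0 < t / Real.log t := by positivity
    have hlogmono : Real.log (t / Real.log t) ≤ Real.log r := Real.log_le_log hq0 hr2
    have hloglogmono : Real.log (Real.log (t / Real.log t)) ≤ Real.log (Real.log r) :=
      Real.log_le_log (by linarith) hlogmono
    have hδη : |δ r| ≤ η (t / Real.log t) := hηle _ _ hr2
    have hllnn : 0 ≤ Real.log (Real.log r) := by
      have := abs_nonneg C₀
      linarith
    have hb1 : 1 - η (t / Real.log t) ≤ 1 - |δ r| := by linarith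
    have hb2 : Real.log (Real.log t) - 1 ≤ Real.log (Real.log r) := by linarith
    have hb3 : 0 ≤ Real.log (Real.log t) - 1 := by
      have := abs_nonneg C₀
      linarith
    have hb4 : 0 ≤ 1 - |δ r| := by linarith
    have hmul : (1 - η (t / Real.log t)) * (Real.log (Real.log t) - 1) ≤
        (1 - |δ r|) * Real.log (Real.log r) := mul_le_mul hb1 hb2 hb3 hb4
    linarith
  -- PART 1
  have hpart1 : ∀ᶠ t in atTop, ∀ r ≥ r₀, Ffun ρ ϑ ε δ t r ≤
      ρ * Real.log (ϑ * (ρ * t / Real.log (Real.log t))) - ρ + e t := by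
    filter_upwards [hgev, hc7, hLtop.eventually_ge_atTop 1] with t hgevt hc7t hL1
    obtain ⟨⟨ht0, hlt, hc1⟩, hgev2⟩ := hgevt
    intro r hr
    obtain ⟨hr0, hϑrpos, hll, -, hg2⟩ := hfacts r hr
    rcases le_or_gt r (t / Real.log t) with hcase | hcase
    · -- near region
      have h1 : Ffun ρ ϑ ε δ t r ≤ ρ * Real.log (ϑ * r) := by
        rw [hF]
        have : 0 ≤ (r/t) * g r := mul_nonneg (by positivity) (by linarith)
        linarith
      have h2 : Real.log (ϑ * r) ≤ Real.log (ϑ * (t / Real.log t)) :=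
        Real.log_le_log (by positivity) (mul_le_mul_of_nonneg_left hcase hϑ.le)
      have h3 := mul_le_mul_of_nonneg_left h2 hρ.le
      linarith
    · -- far region
      have hgc : (1 - η (t / Real.log t)) * (Real.log (Real.log t) - 1) - C₀ ≤ g r :=
        hgev2 r hr hcase.le
      set cn : ℝ := (1 - η (t / Real.log t)) * (Real.log (Real.log t) - 1) - C₀ with hcn
      have hcnpos : 0 < cn := by linarith
      have hstep1 : Ffun ρ ϑ ε δ t r ≤ ρ * Real.log (ϑ * r) - (cn/t) * r := by
        rw [hF]
        have h := mul_le_mul_of_nonneg_left hgc (le_of_lt (div_pos hr0 ht0))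
        have hring : (cn/t) * r = (r/t) * cn := by ring
        rw [hring]
        linarith
      have hsup := EE.sup_bound hρ hϑ (div_pos hcnpos ht0) hr0
      have hρc : ϑ * (ρ / (cn/t)) = ϑ * ρ * t / cn := by
        field_simp
      have hlog1 : Real.log (ϑ * ρ * t / cn) = Real.log (ϑ*ρ*t) - Real.log cn :=
        Real.log_div (by positivity) (ne_of_gt hcnpos)
      have hlog2 : Real.log (ϑ * (ρ * t / Real.log (Real.log t))) =
          Real.log (ϑ*ρ*t) - Real.log (Real.log (Real.log t)) := by
        rw [show ϑ * (ρ * t / Real.log (Real.log t)) = ϑ*ρ*t / Real.log (Real.log t) by ring]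
        exact Real.log_div (by positivity) (by linarith)
      have het : e t = ρ * (Real.log (Real.log (Real.log t)) - Real.log cn) := by
        rw [hedef, hcn]
      calc Ffun ρ ϑ ε δ t r ≤ ρ * Real.log (ϑ * r) - (cn/t) * r := hstep1
        _ ≤ ρ * Real.log (ϑ * (ρ / (cn/t))) - ρ := hsup
        _ = ρ * Real.log (ϑ * (ρ * t / Real.log (Real.log t))) - ρ + e t := by
            rw [hρc, hlog1, hlog2, het]
            ring
  refine ⟨r₀, hr₀pos, ⟨e, he, hpart1⟩, ?_⟩
  -- PART 2 : any maximiser is asymptotically  ρ t / log log t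
  intro R hR
  have hRlarge : ∀ᶠ t : ℝ in atTop, t / Real.log t ≤ R t := by
    filter_upwards [hR, hFreq, h𝔯top.eventually_ge_atTop r₀,
      hG.eventually (eventually_lt_nhds (by norm_num : (1:ℝ) < 2)),
      hdiffeq, hlogL, hLtop.eventually_ge_atTop (2*|Real.log ρ| + 6),
      eventually_gt_atTop 0, Real.tendsto_log_atTop.eventually_ge_atTop 1]
      with t hRt hFreqt h𝔯r₀ hG2 hdifft hlL hLbig ht0 hlt
    by_contra hcon
    push_neg at hcon
    obtain ⟨hRr₀, hmax⟩ := hRt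
    obtain ⟨hR0, hϑR, -, -, hgR1⟩ := hfacts (R t) hRr₀
    have h1 : Ffun ρ ϑ ε δ t (ρ * t / Real.log (Real.log t)) ≤ Ffun ρ ϑ ε δ t (R t) :=
      hmax _ h𝔯r₀
    have h2 : Ffun ρ ϑ ε δ t (R t) ≤ ρ * Real.log (ϑ * R t) := by
      rw [hF]
      have : 0 ≤ (R t / t) * g (R t) := mul_nonneg (by positivity) (by linarith)
      linarith
    have h3 : Real.log (ϑ * R t) ≤ Real.log (ϑ * (t / Real.log t)) :=
      Real.log_le_log (by positivity) (mul_le_mul_of_nonneg_left hcon.le hϑ.le)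
    have h4 := mul_le_mul_of_nonneg_left h3 hρ.le
    rw [hFreqt] at h1
    have k1 : 3 ≤ Real.log ρ + Real.log (Real.log t) - Real.log (Real.log (Real.log t)) := by
      have := neg_abs_le (Real.log ρ)
      linarith
    have k3 : ρ * Real.log (ϑ * (ρ * t / Real.log (Real.log t))) -
        ρ * Real.log (ϑ * (t / Real.log t)) =
        ρ * (Real.log ρ + Real.log (Real.log t) - Real.log (Real.log (Real.log t))) := by
      rw [← hdifft]
      ring
    have k4 : ρ * 3 ≤ ρ * (Real.log ρ + Real.log (Real.log t)
        - Real.log (Real.log (Real.log t))) := mul_le_mul_of_nonneg_left k1 hρ.le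
    have k5 : ρ * G t ≤ ρ * 2 := mul_le_mul_of_nonneg_left hG2.le hρ.le
    linarith
  set u : ℝ → ℝ := fun t => R t / (ρ * t / Real.log (Real.log t)) with hudef
  clear_value u
  have hukey : ∀ᶠ t : ℝ in atTop, 0 < u t ∧ u t * q t - G t ≤ Real.log (u t) := by
    filter_upwards [hR, hRlarge, hgev, hFreq, h𝔯top.eventually_ge_atTop r₀,
      eventually_gt_atTop 0, hLtop.eventually_ge_atTop 1]
      with t hRt hRl hgevt hFreqt h𝔯r₀ ht0 hL1
    obtain ⟨hRr₀, hmax⟩ := hRt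
    obtain ⟨⟨-, -, hcn1⟩, hgev2⟩ := hgevt
    obtain ⟨hR0, hϑR, -, -, -⟩ := hfacts (R t) hRr₀
    have hLpos : 0 < Real.log (Real.log t) := by linarith
    have h𝔯pos : 0 < ρ * t / Real.log (Real.log t) := by positivity
    have hupos : 0 < u t := by
      rw [hudef]
      exact div_pos hR0 h𝔯pos
    have hgR : (1 - η (t / Real.log t)) * (Real.log (Real.log t) - 1) - C₀ ≤ g (R t) :=
      hgev2 _ hRr₀ hRl
    have hF1 : Ffun ρ ϑ ε δ t (R t) ≤ ρ * Real.log (ϑ * R t) -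
        (R t / t) * ((1 - η (t / Real.log t)) * (Real.log (Real.log t) - 1) - C₀) := by
      rw [hF]
      have := mul_le_mul_of_nonneg_left hgR (le_of_lt (div_pos hR0 ht0))
      linarith
    have hlow : ρ * Real.log (ϑ * (ρ * t / Real.log (Real.log t))) - ρ * G t ≤
        Ffun ρ ϑ ε δ t (R t) := by
      rw [← hFreqt]
      exact hmax _ h𝔯r₀
    have hlogu : Real.log (u t) = Real.log (ϑ * R t) -
        Real.log (ϑ * (ρ * t / Real.log (Real.log t))) := by
      rw [hudef]
      rw [← Real.log_div (ne_of_gt (by positivity : (0:ℝ) < ϑ * R t))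
        (ne_of_gt (by positivity : (0:ℝ) < ϑ * (ρ * t / Real.log (Real.log t)))),
        mul_div_mul_left _ _ (ne_of_gt hϑ)]
    have e1 : (R t / t) * ((1 - η (t / Real.log t)) * (Real.log (Real.log t) - 1) - C₀) =
        ρ * (u t * q t) := by
      rw [hudef, hqdef]
      field_simp
    have hlogu' : ρ * Real.log (u t) = ρ * Real.log (ϑ * R t) -
        ρ * Real.log (ϑ * (ρ * t / Real.log (Real.log t))) := by
      rw [hlogu]
      ring
    have key2 : ρ * (u t * q t) - ρ * G t ≤ ρ * Real.log (u t) := by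
      linarith
    have key3 : ρ * (u t * q t - G t) ≤ ρ * Real.log (u t) := by
      calc ρ * (u t * q t - G t) = ρ * (u t * q t) - ρ * G t := by ring
        _ ≤ ρ * Real.log (u t) := key2
    exact ⟨hupos, (mul_le_mul_iff_right₀ hρ).mp key3⟩
  have hubdd : ∀ᶠ t : ℝ in atTop, u t ≤ 64 := by
    filter_upwards [hukey, hq.eventually (eventually_gt_nhds (by norm_num : (3:ℝ)/4 < 1)),
      hG.eventually (eventually_lt_nhds (by norm_num : (1:ℝ) < 2))]
      with t hu hq34 hG2
    obtain ⟨hu0, hune⟩ := hu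
    by_contra hcon
    push_neg at hcon
    have hsq : Real.sqrt (u t) * Real.sqrt (u t) = u t := Real.mul_self_sqrt hu0.le
    have h8 : 8 ≤ Real.sqrt (u t) := by
      have h := Real.sqrt_le_sqrt hcon.le
      rwa [show (64:ℝ) = 8^2 by norm_num, Real.sqrt_sq (by norm_num : (0:ℝ) ≤ 8)] at h
    have hloguu : Real.log (u t) ≤ 2 * Real.sqrt (u t) := by
      have h1 : Real.log (Real.sqrt (u t)) = Real.log (u t) / 2 := Real.log_sqrt hu0.le
      have h2 : Real.log (Real.sqrt (u t)) ≤ Real.sqrt (u t) - 1 :=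
        Real.log_le_sub_one_of_pos (Real.sqrt_pos.mpr hu0)
      linarith
    have hq34' : u t * (3/4) ≤ u t * q t := mul_le_mul_of_nonneg_left hq34.le hu0.le
    nlinarith [hsq, h8, hloguu, hune, hq34', hG2]
  rw [Metric.tendsto_nhds]
  intro ε' hε'
  set a : ℝ := min (ε'/2) (1/2) with hadef
  have ha0 : 0 < a := lt_min (by positivity) (by norm_num)
  have ha2 : a ≤ 1/2 := min_le_right _ _
  have haε : a < ε' := lt_of_le_of_lt (min_le_left _ _) (by linarith)
  have h1a : 0 < 1 - a := by linarith
  have hκ1 : 0 < (1 - a) - Real.log (1 - a) - 1 := by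
    have := Real.log_lt_sub_one_of_pos h1a (by linarith : (1:ℝ) - a ≠ 1)
    linarith
  have hκ2 : 0 < (1 + a) - Real.log (1 + a) - 1 := by
    have := Real.log_lt_sub_one_of_pos (by linarith : (0:ℝ) < 1 + a)
      (by linarith : (1:ℝ) + a ≠ 1)
    linarith
  set κ : ℝ := min ((1 - a) - Real.log (1 - a) - 1) ((1 + a) - Real.log (1 + a) - 1) with hκdef
  have hκ0 : 0 < κ := lt_min hκ1 hκ2
  filter_upwards [hukey, hubdd,
    Metric.tendsto_nhds.mp hq (κ/256) (by positivity),
    Metric.tendsto_nhds.mp hG (κ/4) (by positivity)] with t hu hub hqd hGd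
  obtain ⟨hu0, hune⟩ := hu
  rw [Real.dist_eq] at hqd hGd ⊢
  have hqd' := abs_lt.mp hqd
  have hGd' := abs_lt.mp hGd
  have hua : |u t - 1| < a := by
    by_contra hcon
    push_neg at hcon
    have hmainlow : -(κ/2) ≤ Real.log (u t) - u t + 1 := by
      have f1 : u t * (1 - q t) ≤ 64 * (κ/256) := by
        have h1 : u t * (1 - q t) ≤ u t * (κ/256) :=
          mul_le_mul_of_nonneg_left (by linarith [hqd'.1]) hu0.le
        have h2 : u t * (κ/256) ≤ 64 * (κ/256) :=
          mul_le_mul_of_nonneg_right hub (by positivity)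
        linarith
      have f2 : u t * q t = u t - u t * (1 - q t) := by ring
      linarith [hune, f1, hGd'.2]
    have hmainhigh : Real.log (u t) - u t + 1 ≤ -κ := by
      rcases le_abs'.mp hcon with h | h
      · have hu1 : u t ≤ 1 - a := by linarith
        have hm := EE.hmono_left hu0 hu1 (by linarith)
        have hκle : κ ≤ (1 - a) - Real.log (1 - a) - 1 := min_le_left _ _
        linarith
      · have hu1 : 1 + a ≤ u t := by linarith
        have hm := EE.hmono_right (by linarith : (1:ℝ) ≤ 1 + a) hu1
        have hκle : κ ≤ (1 + a) - Real.log (1 + a) - 1 := min_le_right _ _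
        linarith
    linarith
  linarith
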